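/- For any real q and any integer t ≥ 1, ∑_{k=1}^{t-1} (1/(t-k)) k^{-q} ≤ 2 t^{-min(q,1)} (1 + log t). -/

import Mathlib

open Finset

/-- For any real q and integer t ≥ 1,
    ∑_{k=1}^{t-1} (1/(t-k)) k^{-q} ≤ 2 t^{-min(q,1)} (1 + log t). -/
theorem sum_inv_mul_rpow_le (q : ℝ) (t : ℕ) (ht : 1 ≤ t) :
    ∑ k ∈ Finset.Icc 1 (t - 1), (1 / ((t : ℝ) - (k : ℝ))) * (k : ℝ) ^ (-q) ≤
      2 * (t : ℝ) ^ (-(min q 1)) * (1 + Real.log t) := by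
  set m := min q 1 with hm
  have hm1 : m ≤ 1 := min_le_right _ _
  have hmq : m ≤ q := min_le_left _ _
  rcases eq_or_lt_of_le ht with h1 | h2
  · -- t = 1 : empty sum
    rw [← h1]
    simp
  · have ht2 : 2 ≤ t := h2
    have hT1 : (1:ℝ) ≤ (t:ℝ) := by exact_mod_cast ht
    have hT0 : (0:ℝ) < (t:ℝ) := by linarith
    -- pointwise bound
    have key : ∀ k ∈ Finset.Icc 1 (t-1),
        (1 / ((t : ℝ) - (k : ℝ))) * (k : ℝ) ^ (-q) ≤
          (t:ℝ) ^ (-m) * (1 / ((t : ℝ) - (k : ℝ)) + 1 / (k:ℝ)) := by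
      intro k hk
      rw [Finset.mem_Icc] at hk
      have hk1 : (1:ℝ) ≤ (k:ℝ) := by exact_mod_cast hk.1
      have hkt : (k:ℝ) ≤ (t:ℝ) - 1 := by
        have : (k:ℝ) ≤ ((t-1 : ℕ) : ℝ) := by exact_mod_cast hk.2
        rwa [Nat.cast_sub ht, Nat.cast_one] at this
      have hK0 : (0:ℝ) < (k:ℝ) := by linarith
      have hTK : (0:ℝ) < (t:ℝ) - (k:ℝ) := by linarith
      have step1 : ((k:ℝ)) ^ (-q) ≤ ((k:ℝ)) ^ (-m) :=
        Real.rpow_le_rpow_of_exponent_le hk1 (by linarith)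
      have step2 : (1 / ((t : ℝ) - (k : ℝ))) * (k : ℝ) ^ (-m) ≤
          (t:ℝ) ^ (-m) * (1 / ((t : ℝ) - (k : ℝ)) + 1 / (k:ℝ)) := by
        have e1 : (1 / ((t : ℝ) - (k : ℝ))) * (k : ℝ) ^ (-m)
            = ((k:ℝ) * (k:ℝ) ^ (-m)) / ((k:ℝ) * ((t:ℝ) - (k:ℝ))) := by
          field_simp
        have e2 : (t:ℝ) ^ (-m) * (1 / ((t : ℝ) - (k : ℝ)) + 1 / (k:ℝ))
            = ((t:ℝ) * (t:ℝ) ^ (-m)) / ((k:ℝ) * ((t:ℝ) - (k:ℝ))) := by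
          field_simp
          ring
        rw [e1, e2]
        have hmono : (k:ℝ) ^ (1 - m) ≤ (t:ℝ) ^ (1 - m) :=
          Real.rpow_le_rpow (le_of_lt hK0) (by linarith) (by linarith)
        have ek : (k:ℝ) ^ (1 - m) = (k:ℝ) * (k:ℝ) ^ (-m) := by
          rw [show (1 : ℝ) - m = 1 + (-m) by ring, Real.rpow_add hK0, Real.rpow_one]
        have et : (t:ℝ) ^ (1 - m) = (t:ℝ) * (t:ℝ) ^ (-m) := by
          rw [show (1 : ℝ) - m = 1 + (-m) by ring, Real.rpow_add hT0, Real.rpow_one]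
        rw [ek, et] at hmono
        gcongr
      calc (1 / ((t : ℝ) - (k : ℝ))) * (k : ℝ) ^ (-q)
          ≤ (1 / ((t : ℝ) - (k : ℝ))) * (k : ℝ) ^ (-m) := by
            apply mul_le_mul_of_nonneg_left step1
            positivity
        _ ≤ _ := step2
    refine (Finset.sum_le_sum key).trans ?_
    rw [← Finset.mul_sum]
    -- reflection: sum of 1/(t-k) equals sum of 1/k
    have hrefl : ∑ k ∈ Finset.Icc 1 (t-1), (1 / ((t:ℝ) - (k:ℝ)))
        = ∑ k ∈ Finset.Icc 1 (t-1), (1 / (k:ℝ)) := by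
      refine Finset.sum_nbij' (fun k => t - k) (fun k => t - k) ?_ ?_ ?_ ?_ ?_
      · intro a ha
        simp only [Finset.mem_Icc] at ha ⊢
        omega
      · intro a ha
        simp only [Finset.mem_Icc] at ha ⊢
        omega
      · intro a ha
        simp only [Finset.mem_Icc] at ha
        omega
      · intro a ha
        simp only [Finset.mem_Icc] at ha
        omega
      · intro a ha
        simp only [Finset.mem_Icc] at ha
        have : ((t - a : ℕ) : ℝ) = (t:ℝ) - (a:ℝ) := by
          rw [Nat.cast_sub]; omega
        rw [this]
    have hsum : ∑ k ∈ Finset.Icc 1 (t-1), (1 / ((t:ℝ) - (k:ℝ)) + 1 / (k:ℝ))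
        = 2 * ∑ k ∈ Finset.Icc 1 (t-1), (1 / (k:ℝ)) := by
      rw [Finset.sum_add_distrib, hrefl]; ring
    rw [hsum]
    have hharm : ∑ k ∈ Finset.Icc 1 (t-1), (1 / (k:ℝ)) ≤ 1 + Real.log t := by
      have h1 : ∑ k ∈ Finset.Icc 1 (t-1), (1 / (k:ℝ)) = ((harmonic (t-1) : ℚ) : ℝ) := by
        simp_rw [harmonic_eq_sum_Icc, Rat.cast_sum, Rat.cast_inv, Rat.cast_natCast,
          one_div]
      rw [h1]
      refine (harmonic_le_one_add_log _).trans ?_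
      have : Real.log ((t-1 : ℕ) : ℝ) ≤ Real.log t := by
        apply Real.log_le_log
        · exact_mod_cast (by omega : 0 < t - 1)
        · exact_mod_cast Nat.sub_le t 1
      linarith
    have hpos : (0:ℝ) ≤ (t:ℝ) ^ (-m) := le_of_lt (Real.rpow_pos_of_pos hT0 _)
    calc (t:ℝ) ^ (-m) * (2 * ∑ k ∈ Finset.Icc 1 (t-1), (1 / (k:ℝ)))
        ≤ (t:ℝ) ^ (-m) * (2 * (1 + Real.log t)) := by
          apply mul_le_mul_of_nonneg_left _ hpos
          linarith
      _ = 2 * (t:ℝ) ^ (-m) * (1 + Real.log t) := by ring
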